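/- Let r ≥ 1 and m ≥ 1 be integers and let S ⊆ A(r,m) be a pierced simplex. Then for each i ∈ {1,…,r}, the convex hull of S intersects the i-th coordinate axis ℝ·e_i in exactly one point, and this point is of the form t_i·e_i with t_i > 0. -/

import Mathlib

/-- The point `a_{i,j,k}` of the construction `A(r,m)` (indices `i,j,k` are 1-based). -/
noncomputable def pt (r m i j k : ℕ) : Fin r → ℝ := fun l =>
  if (l : ℕ) + 1 = i then
    (∑ l' ∈ Finset.Icc (j + 1) r, (m : ℝ) ^ (2 * r - 2 * l' + 3))
      + ((r - j : ℕ) : ℝ) * (m : ℝ) + (k : ℝ)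
  else if j + 1 ≤ (l : ℕ) + 1 then
    -((m : ℝ) ^ (2 * r - 2 * ((l : ℕ) + 1) + 3))
  else 0

/-- The point set `A(r,m) ⊆ ℝ^r`. -/
def Apts (r m : ℕ) : Set (Fin r → ℝ) :=
  {x | ∃ i j k : ℕ, 1 ≤ i ∧ i ≤ j ∧ j ≤ r ∧ 1 ≤ k ∧ k ≤ m ∧ x = pt r m i j k}

/-- The set `C_i` of points of `A(r,m)` of color `i`. -/
def colorSet (r m i : ℕ) : Set (Fin r → ℝ) :=
  {x | ∃ j k : ℕ, 1 ≤ i ∧ i ≤ j ∧ j ≤ r ∧ 1 ≤ k ∧ k ≤ m ∧ x = pt r m i j k}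

/-- The set `L_j` of points of `A(r,m)` of layer `j`. -/
def layerSet (r m j : ℕ) : Set (Fin r → ℝ) :=
  {x | ∃ i k : ℕ, 1 ≤ i ∧ i ≤ j ∧ j ≤ r ∧ 1 ≤ k ∧ k ≤ m ∧ x = pt r m i j k}

/-- A set `S ⊆ ℝ^r` is pierced if its convex hull meets the line `ℝ·1_r`. -/
def Pierced {r : ℕ} (S : Set (Fin r → ℝ)) : Prop :=
  ∃ c : ℝ, (fun _ => c : Fin r → ℝ) ∈ convexHull ℝ S

/-- The `i`-th standard basis vector of `ℝ^r` (1-based index). -/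
def stdVec (r i : ℕ) : Fin r → ℝ := fun l => if (l : ℕ) + 1 = i then 1 else 0

noncomputable def PvalF (r m j k : ℕ) : ℝ :=
  (∑ l' ∈ Finset.Icc (j + 1) r, (m : ℝ) ^ (2 * r - 2 * l' + 3))
    + ((r - j : ℕ) : ℝ) * (m : ℝ) + (k : ℝ)

noncomputable def MvalF (r m q : ℕ) : ℝ := (m : ℝ) ^ (2 * r - 2 * (q + 1) + 3)

lemma PvalF_pos {r m j k : ℕ} (hk : 1 ≤ k) : 0 < PvalF r m j k := by
  unfold PvalF
  have h1 : (0:ℝ) ≤ ∑ l' ∈ Finset.Icc (j + 1) r, (m : ℝ) ^ (2 * r - 2 * l' + 3) :=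
    Finset.sum_nonneg fun _ _ => by positivity
  have h2 : (0:ℝ) ≤ ((r - j : ℕ) : ℝ) * (m : ℝ) := by positivity
  have h3 : (1:ℝ) ≤ (k : ℝ) := by exact_mod_cast hk
  linarith

lemma MvalF_pos {r m q : ℕ} (hm : 1 ≤ m) : 0 < MvalF r m q := by
  unfold MvalF
  have : (0:ℝ) < (m:ℝ) := by exact_mod_cast hm
  positivity

lemma pt_apply (r m i j k : ℕ) (hi : 1 ≤ i) (q : Fin r) :
    pt r m i j k q = if (q : ℕ) = i - 1 then PvalF r m j k
      else if j ≤ (q : ℕ) then -(MvalF r m q) else 0 := by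
  unfold pt PvalF MvalF
  have h1 : ((q:ℕ) + 1 = i) ↔ ((q:ℕ) = i - 1) := by omega
  have h2 : (j + 1 ≤ (q:ℕ) + 1) ↔ (j ≤ (q:ℕ)) := by omega
  simp only [h1, h2]

lemma pt_pos_color {r m i j k : ℕ} (hi : 1 ≤ i) (hm : 1 ≤ m) (q : Fin r)
    (hq : 0 < pt r m i j k q) : (q:ℕ) = i - 1 := by
  rw [pt_apply r m i j k hi q] at hq
  split_ifs at hq with h1 h2
  · exact h1
  · exfalso; have := MvalF_pos (r := r) (q := (q:ℕ)) hm; linarith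
  · exact absurd hq (lt_irrefl 0)

lemma sum_shift (h : ℕ → ℝ) (j : ℕ) : ∀ r : ℕ,
    (∑ n ∈ Finset.range r, (if j ≤ n then h (n+1) else 0)) = ∑ l' ∈ Finset.Icc (j+1) r, h l' := by
  intro r
  induction r with
  | zero => rw [Finset.Icc_eq_empty (by omega)]; simp
  | succ n IH =>
    rw [Finset.sum_range_succ, IH]
    by_cases hj : j ≤ n
    · rw [Finset.sum_Icc_succ_top (by omega), if_pos hj]
    · rw [if_neg hj, Finset.Icc_eq_empty (by omega), Finset.Icc_eq_empty (by omega)]; simp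

lemma pt_sum_coords (r m i j k : ℕ) (h1 : 1 ≤ i) (h2 : i ≤ j) (h3 : j ≤ r) :
    ∑ q : Fin r, pt r m i j k q = ((r - j : ℕ) : ℝ) * m + k := by
  have key : ∀ q : Fin r, pt r m i j k q =
      (fun n => (if n = i - 1 then PvalF r m j k else 0)
        + (if j ≤ n then -((m:ℝ) ^ (2 * r - 2 * (n+1) + 3)) else 0)) (q : ℕ) := by
    intro q
    rw [pt_apply r m i j k h1 q]
    simp only []
    by_cases hq : (q:ℕ) = i - 1
    · rw [if_pos hq, if_pos hq, if_neg (by omega)]; ring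
    · rw [if_neg hq, if_neg hq]
      unfold MvalF
      by_cases hj : j ≤ (q:ℕ)
      · ring
      · ring
  rw [Finset.sum_congr rfl (fun q _ => key q),
    Fin.sum_univ_eq_sum_range (fun n => (if n = i - 1 then PvalF r m j k else 0)
        + (if j ≤ n then -((m:ℝ) ^ (2 * r - 2 * (n+1) + 3)) else 0)) r]
  rw [Finset.sum_add_distrib]
  rw [Finset.sum_ite_eq' (Finset.range r) (i-1) (fun _ => PvalF r m j k)]
  rw [if_pos (Finset.mem_range.mpr (by omega))]
  rw [sum_shift (fun x => -((m:ℝ) ^ (2 * r - 2 * x + 3))) j r]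
  rw [Finset.sum_neg_distrib]
  unfold PvalF
  ring

noncomputable def csAux (P Mv : ℕ → ℝ) (J : ℕ → ℕ) (ii : ℕ) (q : ℕ) : ℝ :=
  if q < ii then 0
  else if q = ii then 1
  else (Mv q / P q) * ∑ l ∈ (Finset.range q).attach,
      if J l.1 ≤ q then csAux P Mv J ii l.1 else 0
  termination_by q
  decreasing_by exact Finset.mem_range.mp l.2

lemma csAux_lt {P Mv : ℕ → ℝ} {J : ℕ → ℕ} {ii q : ℕ} (h : q < ii) :
    csAux P Mv J ii q = 0 := by rw [csAux]; simp [h]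

lemma csAux_self {P Mv : ℕ → ℝ} {J : ℕ → ℕ} {ii : ℕ} :
    csAux P Mv J ii ii = 1 := by rw [csAux]; simp

lemma csAux_gt {P Mv : ℕ → ℝ} {J : ℕ → ℕ} {ii q : ℕ} (h : ii < q) :
    csAux P Mv J ii q = (Mv q / P q) *
      ∑ l ∈ Finset.range q, (if J l ≤ q then csAux P Mv J ii l else 0) := by
  rw [csAux]
  rw [if_neg (by omega), if_neg (by omega)]
  rw [Finset.sum_attach (Finset.range q) (fun l => if J l ≤ q then csAux P Mv J ii l else 0)]

lemma csAux_nonneg {P Mv : ℕ → ℝ} {J : ℕ → ℕ} {ii : ℕ}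
    (hP : ∀ q, 0 ≤ P q) (hM : ∀ q, 0 ≤ Mv q) : ∀ q, 0 ≤ csAux P Mv J ii q := by
  intro q
  induction q using Nat.strong_induction_on with
  | _ q IH =>
    rcases lt_trichotomy q ii with h | h | h
    · rw [csAux_lt h]
    · subst h; rw [csAux_self]; norm_num
    · rw [csAux_gt h]
      apply mul_nonneg (div_nonneg (hM q) (hP q))
      apply Finset.sum_nonneg
      intro l hl
      split
      · exact IH l (Finset.mem_range.mp hl)
      · exact le_refl 0


/-- the convex hull of a pierced simplex meets each coordinate axis in
exactly one point, which is of the form `t_i • e_i` with `t_i > 0`. -/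
theorem pierced_simplex_meets_axes_uniquely
    (r m : ℕ) (hr : 1 ≤ r) (hm : 1 ≤ m)
    (S : Set (Fin r → ℝ)) (hSA : S ⊆ Apts r m) (hS : Pierced S) (hcard : S.ncard = r) :
    ∀ i : ℕ, 1 ≤ i → i ≤ r →
      ∃ t : ℝ, 0 < t ∧ t • stdVec r i ∈ convexHull ℝ S ∧
        ∀ t' : ℝ, t' • stdVec r i ∈ convexHull ℝ S → t' = t := by
  classical
  intro i hi1 hi2
  -- finiteness
  have hSfin : S.Finite := Set.finite_of_ncard_ne_zero (by omega)
  set F : Finset (Fin r → ℝ) := hSfin.toFinset with hFdef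
  have hFS : (F : Set (Fin r → ℝ)) = S := hSfin.coe_toFinset
  have hFcard : F.card = r := by
    have h := Set.ncard_eq_toFinset_card _ hSfin
    rw [hcard] at h; exact h.symm
  -- pierced weights
  obtain ⟨c, hc⟩ := hS
  rw [← hFS, Finset.convexHull_eq] at hc
  obtain ⟨w, hw0, hw1, hwc⟩ := hc
  rw [Finset.centerMass_eq_of_sum_1 _ _ hw1] at hwc
  simp only [id_eq] at hwc
  have hcoord : ∀ q : Fin r, ∑ x ∈ F, w x * x q = c := by
    intro q
    have h := congrFun hwc q
    rw [Finset.sum_apply] at h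
    simpa [smul_eq_mul] using h
  -- the coordinate sum of every point of S is at least 1
  have hsc : ∀ x ∈ F, (1:ℝ) ≤ ∑ q : Fin r, x q := by
    intro x hx
    have hxS : x ∈ S := hFS ▸ Finset.mem_coe.mpr hx
    obtain ⟨i', j', k', hi', hij', hjr', hk1', hk2', rfl⟩ := hSA hxS
    rw [pt_sum_coords r m i' j' k' hi' hij' hjr']
    have h3 : (1:ℝ) ≤ (k' : ℝ) := by exact_mod_cast hk1'
    have h2 : (0:ℝ) ≤ ((r - j' : ℕ) : ℝ) * (m : ℝ) := by positivity
    linarith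
  -- c is positive
  have hcpos : 0 < c := by
    have hsum : (r:ℝ) * c = ∑ x ∈ F, w x * (∑ q : Fin r, x q) := by
      have e1 : (r:ℝ) * c = ∑ _q : Fin r, c := by
        rw [Finset.sum_const, Finset.card_univ, Fintype.card_fin, nsmul_eq_mul]
      rw [e1, Finset.sum_congr rfl (fun q _ => (hcoord q).symm), Finset.sum_comm]
      exact Finset.sum_congr rfl fun x _ => (Finset.mul_sum _ _ _).symm
    have hx0 : ∃ x ∈ F, 0 < w x := by
      by_contra h
      push_neg at h
      have : ∑ x ∈ F, w x = 0 :=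
        Finset.sum_eq_zero fun x hx => le_antisymm (h x hx) (hw0 x hx)
      rw [hw1] at this; norm_num at this
    obtain ⟨x₀, hx₀F, hx₀⟩ := hx0
    have hterm : ∀ x ∈ F, 0 ≤ w x * ∑ q : Fin r, x q := fun x hx =>
      mul_nonneg (hw0 x hx) (le_trans zero_le_one (hsc x hx))
    have h1 : w x₀ * ∑ q : Fin r, x₀ q ≤ ∑ x ∈ F, w x * ∑ q : Fin r, x q :=
      Finset.single_le_sum hterm hx₀F
    have h2 : w x₀ * 1 ≤ w x₀ * ∑ q : Fin r, x₀ q :=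
      mul_le_mul_of_nonneg_left (hsc x₀ hx₀F) (le_of_lt hx₀)
    have hrpos : (0:ℝ) < r := by exact_mod_cast hr
    nlinarith
  -- each color is present: choose the point of color q+1
  have hcolor : ∀ q : Fin r, ∃ x, x ∈ F ∧ 0 < x q := by
    intro q
    by_contra h
    push_neg at h
    have hle : ∑ x ∈ F, w x * x q ≤ 0 := by
      apply Finset.sum_nonpos
      intro x hx
      exact mul_nonpos_of_nonneg_of_nonpos (hw0 x hx) (h x hx)
    rw [hcoord q] at hle
    linarith
  choose f hfF hfpos using hcolor
  have hfS : ∀ l : Fin r, f l ∈ S := fun l => hFS ▸ Finset.mem_coe.mpr (hfF l)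
  -- injectivity of f
  have hinj : Function.Injective f := by
    intro q q' hqq
    obtain ⟨i', j', k', hi', hij', hjr', hk1', hk2', hpt⟩ := hSA (hfS q')
    have h1 : 0 < pt r m i' j' k' q := by rw [← hpt, ← hqq]; exact hfpos q
    have h2 : 0 < pt r m i' j' k' q' := by rw [← hpt]; exact hfpos q'
    have e1 := pt_pos_color hi' hm q h1
    have e2 := pt_pos_color hi' hm q' h2
    exact Fin.ext (by omega)
  -- f is onto F
  have himg : Finset.image f Finset.univ = F := by
    apply Finset.eq_of_subset_of_card_le
    · intro x hx
      obtain ⟨q, _, rfl⟩ := Finset.mem_image.mp hx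
      exact hfF q
    · rw [hFcard, Finset.card_image_of_injective _ hinj, Finset.card_univ, Fintype.card_fin]
  -- extract parameters
  have hparam : ∀ l : Fin r, ∃ j k : ℕ, (l:ℕ) < j ∧ j ≤ r ∧ 1 ≤ k ∧ k ≤ m ∧
      f l = pt r m ((l:ℕ)+1) j k := by
    intro l
    obtain ⟨i', j', k', hi', hij', hjr', hk1', hk2', hpt⟩ := hSA (hfS l)
    have hci : (l:ℕ) = i' - 1 := pt_pos_color hi' hm l (by rw [← hpt]; exact hfpos l)
    have hieq : i' = (l:ℕ) + 1 := by omega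
    exact ⟨j', k', by omega, hjr', hk1', hk2', by rw [hpt, hieq]⟩
  choose J K hJ1 hJ2 hK1 hK2 hfeq using hparam
  -- extend to ℕ
  obtain ⟨Jn, Kn, hJn1, hJn2, hKn1, hfeq'⟩ :
      ∃ Jn Kn : ℕ → ℕ, (∀ q, q < Jn q) ∧ (∀ q, q < r → Jn q ≤ r) ∧ (∀ q, 1 ≤ Kn q) ∧
        (∀ l : Fin r, f l = pt r m ((l:ℕ)+1) (Jn (l:ℕ)) (Kn (l:ℕ))) := by
    refine ⟨fun q => if h : q < r then J ⟨q, h⟩ else q + 1,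
           fun q => if h : q < r then K ⟨q, h⟩ else 1, ?_, ?_, ?_, ?_⟩
    · intro q
      by_cases h : q < r
      · simp only [dif_pos h]; exact hJ1 ⟨q, h⟩
      · simp only [dif_neg h]; omega
    · intro q hq
      simp only [dif_pos hq]; exact hJ2 ⟨q, hq⟩
    · intro q
      by_cases h : q < r
      · simp only [dif_pos h]; exact hK1 ⟨q, h⟩
      · simp only [dif_neg h]; exact le_refl 1
    · intro l
      simp only [dif_pos l.isLt, Fin.eta]
      exact hfeq l
  -- abbreviations
  obtain ⟨Pn, Mn, hPneq, hMneq⟩ :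
      ∃ Pn Mn : ℕ → ℝ, (∀ q, Pn q = PvalF r m (Jn q) (Kn q)) ∧ (∀ q, Mn q = MvalF r m q) :=
    ⟨_, _, fun _ => rfl, fun _ => rfl⟩
  set cs : ℕ → ℝ := csAux Pn Mn Jn (i-1) with hcsdef
  set Csum : ℝ := ∑ l ∈ Finset.range r, cs l with hCsumdef
  have hPn_pos : ∀ q, 0 < Pn q := fun q => (hPneq q) ▸ PvalF_pos (hKn1 q)
  have hMn_pos : ∀ q, 0 < Mn q := fun q => (hMneq q) ▸ MvalF_pos hm
  have hcs0 : ∀ q, 0 ≤ cs q :=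
    csAux_nonneg (fun q => le_of_lt (hPn_pos q)) (fun q => le_of_lt (hMn_pos q))
  have hiin : i - 1 < r := by omega
  have hCsum1 : (1:ℝ) ≤ Csum := by
    have h1 : cs (i-1) ≤ Csum :=
      Finset.single_le_sum (fun l _ => hcs0 l) (Finset.mem_range.mpr hiin)
    have h2 : cs (i-1) = 1 := csAux_self
    linarith
  have hCsum0 : (0:ℝ) < Csum := by linarith
  -- key computation: coordinate q of a weighted combination
  have hkey : ∀ (g : ℕ → ℝ) (q : Fin r),
      (∑ l : Fin r, g (l:ℕ) * (f l) q)
        = g (q:ℕ) * Pn (q:ℕ)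
          - Mn (q:ℕ) * ∑ l ∈ Finset.range (q:ℕ), (if Jn l ≤ (q:ℕ) then g l else 0) := by
    intro g q
    have e1 : ∀ l : Fin r, g (l:ℕ) * (f l) q
        = (fun n => (if n = (q:ℕ) then g (q:ℕ) * Pn n else 0)
           + (if Jn n ≤ (q:ℕ) then -(Mn (q:ℕ)) * g n else 0)) (l:ℕ) := by
      intro l
      rw [hfeq' l, pt_apply r m ((l:ℕ)+1) (Jn (l:ℕ)) (Kn (l:ℕ)) (by omega) q]
      simp only [Nat.add_sub_cancel]
      by_cases hlq : (q:ℕ) = (l:ℕ)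
      · rw [if_pos hlq, if_pos hlq.symm, if_neg (by have := hJn1 (l:ℕ); omega)]
        rw [hlq, hPneq]
        ring
      · rw [if_neg hlq, if_neg (show ¬((l:ℕ) = (q:ℕ)) from fun h => hlq h.symm)]
        by_cases hJl : Jn (l:ℕ) ≤ (q:ℕ)
        · rw [if_pos hJl, if_pos hJl, hMneq]; ring
        · rw [if_neg hJl, if_neg hJl]; ring
    rw [Finset.sum_congr rfl (fun l _ => e1 l),
      Fin.sum_univ_eq_sum_range (fun n => (if n = (q:ℕ) then g (q:ℕ) * Pn n else 0)
           + (if Jn n ≤ (q:ℕ) then -(Mn (q:ℕ)) * g n else 0)) r]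
    rw [Finset.sum_add_distrib]
    rw [Finset.sum_ite_eq' (Finset.range r) ((q:ℕ)) (fun n => g (q:ℕ) * Pn n)]
    rw [if_pos (Finset.mem_range.mpr q.isLt)]
    have e2 : ∑ n ∈ Finset.range r, (if Jn n ≤ (q:ℕ) then -(Mn (q:ℕ)) * g n else 0)
        = ∑ n ∈ Finset.range (q:ℕ), (if Jn n ≤ (q:ℕ) then -(Mn (q:ℕ)) * g n else 0) := by
      refine (Finset.sum_subset (Finset.range_subset_range.mpr (le_of_lt q.isLt)) ?_).symm
      intro n _ hn
      rw [Finset.mem_range, not_lt] at hn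
      rw [if_neg (by have := hJn1 n; omega)]
    rw [e2]
    have e3 : ∑ n ∈ Finset.range (q:ℕ), (if Jn n ≤ (q:ℕ) then -(Mn (q:ℕ)) * g n else 0)
        = -(Mn (q:ℕ)) * ∑ n ∈ Finset.range (q:ℕ), (if Jn n ≤ (q:ℕ) then g n else 0) := by
      rw [Finset.mul_sum]
      refine Finset.sum_congr rfl fun n _ => ?_
      by_cases hJ : Jn n ≤ (q:ℕ)
      · rw [if_pos hJ, if_pos hJ]
      · rw [if_neg hJ, if_neg hJ, mul_zero]
    rw [e3]; ring
  -- uniqueness of the representation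
  have huniq : ∀ (ν : Fin r → ℝ) (t' : ℝ),
      (∑ l : Fin r, ν l = 1) →
      (∀ q : Fin r, ∑ l : Fin r, ν l * (f l) q = t' * (if (q:ℕ) + 1 = i then 1 else 0)) →
      t' = Pn (i-1) / Csum := by
    intro ν t' hν1 hνe
    set g : ℕ → ℝ := fun l => if h : l < r then ν ⟨l, h⟩ else 0 with hgdef
    have hgl : ∀ l : Fin r, g (l:ℕ) = ν l := by
      intro l; rw [hgdef]; simp only [dif_pos l.isLt, Fin.eta]
    have hEn : ∀ qn : ℕ, qn < r →
        g qn * Pn qn - Mn qn * (∑ l ∈ Finset.range qn, if Jn l ≤ qn then g l else 0)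
          = t' * (if qn + 1 = i then 1 else 0) := by
      intro qn hq
      have h := hνe ⟨qn, hq⟩
      rw [Finset.sum_congr rfl (fun l _ => by rw [← hgl l])] at h
      rw [hkey g ⟨qn, hq⟩] at h
      exact h
    have hzero : ∀ qn, qn < i - 1 → g qn = 0 := by
      intro qn
      induction qn using Nat.strong_induction_on with
      | _ qn IH =>
        intro hqn
        have hq : qn < r := by omega
        have hT : (∑ l ∈ Finset.range qn, if Jn l ≤ qn then g l else 0) = 0 := by
          refine Finset.sum_eq_zero fun l hl => ?_
          have hlq := Finset.mem_range.mp hl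
          by_cases hc : Jn l ≤ qn
          · rw [if_pos hc, IH l hlq (by omega)]
          · rw [if_neg hc]
        have h := hEn qn hq
        rw [hT, if_neg (by omega)] at h
        have hmul : g qn * Pn qn = 0 := by linarith
        exact (mul_eq_zero.mp hmul).resolve_right (ne_of_gt (hPn_pos qn))
    have hrep : ∀ qn, qn < r → g qn = g (i-1) * cs qn := by
      intro qn
      induction qn using Nat.strong_induction_on with
      | _ qn IH =>
        intro hq
        rcases lt_trichotomy qn (i-1) with h | h | h
        · rw [hzero qn h, hcsdef, csAux_lt h]; ring
        · rw [h, hcsdef, csAux_self]; ring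
        · have hT : (∑ l ∈ Finset.range qn, if Jn l ≤ qn then g l else 0)
              = g (i-1) * ∑ l ∈ Finset.range qn, (if Jn l ≤ qn then cs l else 0) := by
            rw [Finset.mul_sum]
            refine Finset.sum_congr rfl fun l hl => ?_
            have hlq := Finset.mem_range.mp hl
            by_cases hc : Jn l ≤ qn
            · rw [if_pos hc, if_pos hc, IH l hlq (by omega)]
            · rw [if_neg hc, if_neg hc, mul_zero]
          have hEq := hEn qn hq
          rw [hT, if_neg (by omega)] at hEq
          have hgt : cs qn = (Mn qn / Pn qn) *
              ∑ l ∈ Finset.range qn, (if Jn l ≤ qn then cs l else 0) := by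
            rw [hcsdef]; exact csAux_gt h
          have hPne : Pn qn ≠ 0 := ne_of_gt (hPn_pos qn)
          rw [hgt]
          field_simp
          linarith [hEq]
    have hsum : ∑ l ∈ Finset.range r, g l = 1 := by
      rw [← Fin.sum_univ_eq_sum_range g r, Finset.sum_congr rfl (fun l _ => hgl l), hν1]
    have hnorm : g (i-1) * Csum = 1 := by
      rw [hCsumdef, Finset.mul_sum, ← hsum]
      exact (Finset.sum_congr rfl fun l hl => (hrep l (Finset.mem_range.mp hl))).symm
    have hgi : g (i-1) = 1 / Csum := by
      field_simp
      linarith [hnorm]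
    have hEi := hEn (i-1) hiin
    have hTi : (∑ l ∈ Finset.range (i-1), if Jn l ≤ i-1 then g l else 0) = 0 := by
      refine Finset.sum_eq_zero fun l hl => ?_
      have hlq := Finset.mem_range.mp hl
      by_cases hc : Jn l ≤ i-1
      · rw [if_pos hc, hzero l hlq]
      · rw [if_neg hc]
    rw [hTi, if_pos (by omega), mul_zero, sub_zero, mul_one, hgi] at hEi
    rw [← hEi]; ring
  -- the candidate point
  have htpos : 0 < Pn (i-1) / Csum := div_pos (hPn_pos (i-1)) hCsum0
  refine ⟨Pn (i-1) / Csum, htpos, ?_, ?_⟩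
  · -- existence
    set ν : Fin r → ℝ := fun l => cs (l:ℕ) / Csum with hνdef
    have hν0 : ∀ l, 0 ≤ ν l := fun l => div_nonneg (hcs0 _) (le_of_lt hCsum0)
    have hν1 : ∑ l : Fin r, ν l = 1 := by
      rw [hνdef]
      rw [← Finset.sum_div, Fin.sum_univ_eq_sum_range cs r, ← hCsumdef,
        div_self (ne_of_gt hCsum0)]
    have hνe : ∀ q : Fin r, ∑ l : Fin r, ν l * (f l) q
        = (Pn (i-1) / Csum) * (if (q:ℕ) + 1 = i then 1 else 0) := by
      intro q
      have hgν : ∀ l : Fin r, ν l = (fun n => cs n / Csum) (l:ℕ) := fun l => rfl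
      rw [Finset.sum_congr rfl (fun l _ => by rw [hgν l]), hkey (fun n => cs n / Csum) q]
      have hdist : ∑ l ∈ Finset.range (q:ℕ), (if Jn l ≤ (q:ℕ) then cs l / Csum else 0)
          = (∑ l ∈ Finset.range (q:ℕ), if Jn l ≤ (q:ℕ) then cs l else 0) / Csum := by
        rw [Finset.sum_div]
        refine Finset.sum_congr rfl fun l _ => ?_
        by_cases hc : Jn l ≤ (q:ℕ)
        · rw [if_pos hc, if_pos hc]
        · rw [if_neg hc, if_neg hc, zero_div]
      rw [hdist]
      rcases lt_trichotomy ((q:ℕ)) (i-1) with h | h | h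
      · have hz : cs (q:ℕ) = 0 := by rw [hcsdef]; exact csAux_lt h
        have hT : (∑ l ∈ Finset.range (q:ℕ), if Jn l ≤ (q:ℕ) then cs l else 0) = 0 := by
          refine Finset.sum_eq_zero fun l hl => ?_
          have hlq := Finset.mem_range.mp hl
          by_cases hc : Jn l ≤ (q:ℕ)
          · rw [if_pos hc, hcsdef, csAux_lt (by omega)]
          · rw [if_neg hc]
        rw [hz, hT, if_neg (by omega)]
        simp
      · have ho : cs (q:ℕ) = 1 := by rw [h, hcsdef]; exact csAux_self
        have hT : (∑ l ∈ Finset.range (q:ℕ), if Jn l ≤ (q:ℕ) then cs l else 0) = 0 := by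
          refine Finset.sum_eq_zero fun l hl => ?_
          have hlq := Finset.mem_range.mp hl
          by_cases hc : Jn l ≤ (q:ℕ)
          · rw [if_pos hc, hcsdef, csAux_lt (by omega)]
          · rw [if_neg hc]
        rw [ho, hT, if_pos (by omega), h]
        field_simp
        ring
      · have hgt : cs (q:ℕ) = (Mn (q:ℕ) / Pn (q:ℕ)) *
            ∑ l ∈ Finset.range (q:ℕ), (if Jn l ≤ (q:ℕ) then cs l else 0) := by
          rw [hcsdef]; exact csAux_gt h
        rw [if_neg (by omega), mul_zero, hgt]
        have hPne : Pn (q:ℕ) ≠ 0 := ne_of_gt (hPn_pos (q:ℕ))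
        have hCne : Csum ≠ 0 := ne_of_gt hCsum0
        field_simp
        ring
    have hcm : Finset.univ.centerMass ν f ∈ convexHull ℝ S :=
      Finset.centerMass_mem_convexHull _ (fun l _ => hν0 l) (by rw [hν1]; norm_num)
        (fun l _ => hfS l)
    rw [Finset.centerMass_eq_of_sum_1 _ _ hν1] at hcm
    have heq : (Pn (i-1) / Csum) • stdVec r i = ∑ l : Fin r, ν l • f l := by
      funext q
      rw [Finset.sum_apply]
      simp only [Pi.smul_apply, smul_eq_mul]
      rw [hνe q]
      rfl
    rw [heq]
    exact hcm
  · -- uniqueness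
    intro t' ht'
    rw [← hFS, Finset.convexHull_eq] at ht'
    obtain ⟨w', hw'0, hw'1, hw'c⟩ := ht'
    rw [Finset.centerMass_eq_of_sum_1 _ _ hw'1] at hw'c
    simp only [id_eq] at hw'c
    have hinj' : ∀ x ∈ (Finset.univ : Finset (Fin r)), ∀ y ∈ Finset.univ, f x = f y → x = y :=
      fun x _ y _ h => hinj h
    have hs1 : ∑ l : Fin r, w' (f l) = 1 := by
      rw [← hw'1, ← himg, Finset.sum_image hinj']
    have hs2 : ∀ q : Fin r, ∑ l : Fin r, w' (f l) * (f l) q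
        = t' * (if (q:ℕ) + 1 = i then 1 else 0) := by
      intro q
      have h := congrFun hw'c q
      rw [Finset.sum_apply] at h
      simp only [Pi.smul_apply, smul_eq_mul] at h
      rw [← himg, Finset.sum_image hinj'] at h
      rw [h]
      rfl
    exact huniq (fun l => w' (f l)) t' hs1 hs2
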